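/- Let α ∈ O_C with 0 < v_p(α) < ∞, let Λ_α = O_C[[T₁,T₂]]/(T₁T₂ − α), let M = (Λ_α[1/p])^× be the group of units, and let ℓ be a prime number different from p. Let deg : M → ℤ be the group homomorphism sending a unit u to the integer k appearing in its unique factorization u = c·T₁^k·u₊·u₋ (with c ∈ C^×, u₊ ∈ 1 + T₁·O_C[[T₁]], u₋ ∈ 1 + T₂·O_C[[T₂]]). Then the maps M/M^{ℓⁿ} → ℤ/ℓⁿℤ induced by deg yield, in the inverse limit, a group isomorphism lim_n M/M^{ℓⁿ} ≅ lim_n ℤ/ℓⁿℤ = ℤ_ℓ. -/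

import Mathlib

/-!
Statement 6: `C` is an algebraically closed field, complete for a valuation
`v_p` with `v_p(p) = 1` and `v_p(C^×) = ℚ` (encoded via the norm
`‖x‖ = p^{-v_p(x)}`), `O_C` its valuation ring.  For `α ∈ O_C` with
`0 < v_p α < ∞`, let `Λ_α = O_C[[T₁,T₂]]/(T₁T₂ - α)`, let
`M = (Λ_α[1/p])^×`, and let `ℓ ≠ p` be prime.  Let `deg : M → ℤ` be the group
homomorphism sending a unit `u` to the integer `k` appearing in its unique
factorization `u = c·T₁^k·u₊·u₋` (`c ∈ C^×`, `u₊ ∈ 1 + T₁·O_C[[T₁]]`,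
`u₋ ∈ 1 + T₂·O_C[[T₂]]`).  Then the maps `M/M^{ℓⁿ} → ℤ/ℓⁿℤ` induced by `deg`
yield, in the inverse limit, a group isomorphism
`lim_n M/M^{ℓⁿ} ≅ lim_n ℤ/ℓⁿℤ = ℤ_ℓ`.  The bijectivity of the induced map of
inverse limits is expressed elementwise: elements of `lim_n M/M^{ℓⁿ}` are
represented by sequences `u : ℕ → M` with `u (n+1) ≡ u n mod M^{ℓⁿ}`, such an
element is trivial iff `u n ∈ M^{ℓⁿ}` for all `n`, and elements of
`ℤ_ℓ = lim_n ℤ/ℓⁿℤ` are represented by sequences `k : ℕ → ℤ` with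
`ℓⁿ ∣ k (n+1) - k n`.
-/

/-- The valuation ring `O_C` (closed unit ball) of an ultrametric normed field. -/
def UnitBall (C : Type*) [NormedField C] [IsUltrametricDist C] : Subring C where
  carrier := {x | ‖x‖ ≤ 1}
  one_mem' := by simp
  mul_mem' := by
    intro a b ha hb
    simp only [Set.mem_setOf_eq] at *
    calc ‖a * b‖ = ‖a‖ * ‖b‖ := norm_mul a b
    _ ≤ 1 := by nlinarith [norm_nonneg a, norm_nonneg b]
  add_mem' := by
    intro a b ha hb
    simp only [Set.mem_setOf_eq] at *
    exact le_trans (IsUltrametricDist.norm_add_le_max a b) (max_le ha hb)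
  zero_mem' := by simp
  neg_mem' := by
    intro a ha
    simpa using ha

/-- The ring `Λ_α = O_C[[T₁,T₂]]/(T₁T₂ - α)`. -/
abbrev JambeRing (C : Type*) [NormedField C] [IsUltrametricDist C]
    (α : UnitBall C) : Type _ :=
  MvPowerSeries (Fin 2) (UnitBall C) ⧸
    Ideal.span {(MvPowerSeries.X 0 : MvPowerSeries (Fin 2) (UnitBall C)) *
      MvPowerSeries.X 1 - MvPowerSeries.C (σ := Fin 2) (R := UnitBall C) α}

/-- The ring `Λ_α[1/p]`. -/
abbrev JambeLoc (p : ℕ) (C : Type*) [NormedField C] [IsUltrametricDist C]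
    (α : UnitBall C) : Type _ :=
  Localization.Away ((p : JambeRing C α))

/-- The canonical map `O_C[[T₁,T₂]] → Λ_α[1/p]`. -/
noncomputable def jambeMap (p : ℕ) (C : Type*) [NormedField C] [IsUltrametricDist C]
    (α : UnitBall C) : MvPowerSeries (Fin 2) (UnitBall C) →+* JambeLoc p C α :=
  (algebraMap (JambeRing C α) (JambeLoc p C α)).comp (Ideal.Quotient.mk _)

/-- `c` belongs to `C^×` viewed inside `Λ_α[1/p]`. -/
def MemCstar (p : ℕ) (C : Type*) [NormedField C] [IsUltrametricDist C]
    (α : UnitBall C) (c : JambeLoc p C α) : Prop :=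
  ∃ (a : UnitBall C) (s : ℕ), (a : C) ≠ 0 ∧
    (p : JambeLoc p C α) ^ s * c =
      jambeMap p C α (MvPowerSeries.C (σ := Fin 2) (R := UnitBall C) a)

/-- `x` belongs to `1 + T_i·O_C[[T_i]]` viewed inside `Λ_α[1/p]`. -/
def MemOneAddT (p : ℕ) (C : Type*) [NormedField C] [IsUltrametricDist C]
    (α : UnitBall C) (i : Fin 2) (x : JambeLoc p C α) : Prop :=
  ∃ g : MvPowerSeries (Fin 2) (UnitBall C),
    MvPowerSeries.coeff (R := UnitBall C) 0 g = 1 ∧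
    (∀ d : Fin 2 →₀ ℕ, (∃ j, j ≠ i ∧ d j ≠ 0) →
      MvPowerSeries.coeff (R := UnitBall C) d g = 0) ∧
    x = jambeMap p C α g


set_option linter.unusedSectionVars false
set_option maxHeartbeats 2000000
set_option synthInstance.maxHeartbeats 1000000
section Aux

open MvPowerSeries

variable {R : Type*} [CommRing R]

/-- `a` has all coefficients of total degree `< n` equal to zero. -/
def OrdGE (n : ℕ) (a : MvPowerSeries (Fin 2) R) : Prop :=
  ∀ d : Fin 2 →₀ ℕ, d 0 + d 1 < n → MvPowerSeries.coeff (R := R) d a = 0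

lemma ordGE_zero (n : ℕ) : OrdGE n (0 : MvPowerSeries (Fin 2) R) := by
  intro d _; simp

lemma OrdGE.mono {m n : ℕ} (h : m ≤ n) {a : MvPowerSeries (Fin 2) R} (ha : OrdGE n a) :
    OrdGE m a := fun d hd => ha d (lt_of_lt_of_le hd h)

lemma OrdGE.add {n : ℕ} {a b : MvPowerSeries (Fin 2) R} (ha : OrdGE n a) (hb : OrdGE n b) :
    OrdGE n (a + b) := by
  intro d hd; rw [map_add, ha d hd, hb d hd, add_zero]

lemma OrdGE.neg {n : ℕ} {a : MvPowerSeries (Fin 2) R} (ha : OrdGE n a) : OrdGE n (-a) := by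
  intro d hd; rw [map_neg, ha d hd, neg_zero]

lemma OrdGE.mul {m n : ℕ} {a b : MvPowerSeries (Fin 2) R} (ha : OrdGE m a) (hb : OrdGE n b) :
    OrdGE (m + n) (a * b) := by
  classical
  intro d hd
  rw [MvPowerSeries.coeff_mul]
  apply Finset.sum_eq_zero
  rintro ⟨e, e'⟩ hmem
  rw [Finset.HasAntidiagonal.mem_antidiagonal] at hmem
  have h0 : e 0 + e' 0 = d 0 := by rw [← hmem]; simp
  have h1 : e 1 + e' 1 = d 1 := by rw [← hmem]; simp
  rcases lt_or_ge (e 0 + e 1) m with h | h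
  · rw [ha e h, zero_mul]
  · have : e' 0 + e' 1 < n := by omega
    rw [hb e' this, mul_zero]

lemma ordGE_all (a : MvPowerSeries (Fin 2) R) : OrdGE 0 a := fun d hd => absurd hd (by omega)

lemma OrdGE.eq_zero_of_forall {a : MvPowerSeries (Fin 2) R} (h : ∀ n, OrdGE n a) : a = 0 := by
  ext d
  simpa using h (d 0 + d 1 + 1) d (by omega)

/-- binomial-type expansion -/
lemma pow_add_expand (x y : R) (n : ℕ) :
    ∃ B : R, (x + y) ^ n = x ^ n + n * x ^ (n - 1) * y + y ^ 2 * B := by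
  induction n with
  | zero => exact ⟨0, by simp⟩
  | succ n ih =>
    obtain ⟨B, hB⟩ := ih
    cases n with
    | zero => exact ⟨0, by ring⟩
    | succ m =>
      refine ⟨x * B + (m + 1) * x ^ m + y * B, ?_⟩
      have hx : (x + y) ^ (m + 1 + 1) = (x + y) * ((x + y) ^ (m + 1)) := by ring
      rw [hx, hB]
      simp only [Nat.add_sub_cancel]
      push_cast
      ring

section Root

variable {q : ℕ} (c : R) (hc : (q : R) * c = 1) (f : MvPowerSeries (Fin 2) R)
  (hf : MvPowerSeries.constantCoeff (σ := Fin 2) (R := R) f = 1)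

/-- Newton iteration for the `q`-th root. -/
noncomputable def rootSeq (c : R) (f : MvPowerSeries (Fin 2) R) : ℕ → MvPowerSeries (Fin 2) R
  | 0 => 1
  | (k+1) => rootSeq c f k +
      (MvPowerSeries.C (σ := Fin 2) (R := R) c) * (f - (rootSeq c f k) ^ q)

lemma wt_zero (d : Fin 2 →₀ ℕ) (hd : d 0 + d 1 = 0) : d = 0 := by
  ext i
  fin_cases i <;> simp_all

include hc hf in
lemma rootSeq_invariant : ∀ k : ℕ,
    MvPowerSeries.constantCoeff (σ := Fin 2) (R := R) (rootSeq (q := q) c f k) = 1 ∧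
    OrdGE (k + 1) (f - (rootSeq (q := q) c f k) ^ q) := by
  intro k
  induction k with
  | zero =>
    constructor
    · simp [rootSeq]
    · intro d hd
      have hd0 : d = 0 := wt_zero d (by omega)
      subst hd0
      simp [rootSeq, MvPowerSeries.coeff_zero_eq_constantCoeff, hf]
  | succ k ih =>
    obtain ⟨h1, h2⟩ := ih
    set g := rootSeq (q := q) c f k with hg
    set e := f - g ^ q with he
    have hstep : rootSeq (q := q) c f (k+1) = g + (MvPowerSeries.C (σ := Fin 2) (R := R) c) * e := rfl
    have hconst_e : MvPowerSeries.constantCoeff (σ := Fin 2) (R := R) e = 0 := by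
      have := h2 0 (by simp)
      simpa [MvPowerSeries.coeff_zero_eq_constantCoeff] using this
    constructor
    · rw [hstep, map_add, map_mul, h1, hconst_e, mul_zero, add_zero]
    · -- main estimate
      obtain ⟨B, hB⟩ := pow_add_expand g ((MvPowerSeries.C (σ := Fin 2) (R := R) c) * e) q
      have hqc : (q : MvPowerSeries (Fin 2) R) * (MvPowerSeries.C (σ := Fin 2) (R := R) c) = 1 := by
        rw [← map_natCast (MvPowerSeries.C (σ := Fin 2) (R := R)) q, ← map_mul, hc, map_one]
      have key : f - (rootSeq (q := q) c f (k+1)) ^ q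
          = e * (1 - g ^ (q-1)) - e * (e * ((MvPowerSeries.C (σ := Fin 2) (R := R) c)^2 * B)) := by
        rw [hstep, hB]
        have : (q : MvPowerSeries (Fin 2) R) * g ^ (q - 1) * (MvPowerSeries.C (σ := Fin 2) (R := R) c * e)
            = g ^ (q-1) * e := by
          rw [show (q : MvPowerSeries (Fin 2) R) * g ^ (q - 1) *
              (MvPowerSeries.C (σ := Fin 2) (R := R) c * e)
              = ((q : MvPowerSeries (Fin 2) R) * (MvPowerSeries.C (σ := Fin 2) (R := R) c)) *
                (g ^ (q-1) * e) from by ring, hqc, one_mul]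
        rw [this]
        ring
      rw [key]
      have hone : OrdGE 1 (1 - g ^ (q - 1)) := by
        intro d hd
        have hd0 : d = 0 := wt_zero d (by omega)
        subst hd0
        have : MvPowerSeries.constantCoeff (σ := Fin 2) (R := R) (g ^ (q-1)) = 1 := by
          rw [map_pow, h1, one_pow]
        simp [MvPowerSeries.coeff_zero_eq_constantCoeff, this]
      have t1 : OrdGE (k + 2) (e * (1 - g ^ (q-1))) := by
        have := h2.mul hone
        simpa using this
      have t2 : OrdGE (k + 2) (e * (e * ((MvPowerSeries.C (σ := Fin 2) (R := R) c)^2 * B))) := by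
        have := h2.mul (h2.mul (ordGE_all ((MvPowerSeries.C (σ := Fin 2) (R := R) c)^2 * B)))
        exact this.mono (by omega)
      simpa [sub_eq_add_neg] using t1.add t2.neg

end Root

section Root2

variable {q : ℕ} {c : R} (hc : (q : R) * c = 1) {f : MvPowerSeries (Fin 2) R}
  (hf : MvPowerSeries.constantCoeff (σ := Fin 2) (R := R) f = 1)

include hc hf in
lemma rootSeq_stable : ∀ k m : ℕ, k ≤ m →
    OrdGE (k + 1) (rootSeq (q := q) c f m - rootSeq (q := q) c f k) := by
  intro k m hkm
  induction m with
  | zero =>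
    have : k = 0 := by omega
    subst this
    simpa using ordGE_zero _
  | succ m ih =>
    rcases Nat.lt_or_ge k (m+1) with h | h
    · have hkm' : k ≤ m := by omega
      have h1 : OrdGE (k+1) (rootSeq (q := q) c f m - rootSeq (q := q) c f k) := ih hkm'
      have h2 : OrdGE (m+1) (rootSeq (q := q) c f (m+1) - rootSeq (q := q) c f m) := by
        have hstep : rootSeq (q := q) c f (m+1) - rootSeq (q := q) c f m
            = (MvPowerSeries.C (σ := Fin 2) (R := R) c) * (f - (rootSeq (q := q) c f m) ^ q) := by
          simp [rootSeq]
        rw [hstep]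
        have := (ordGE_all (MvPowerSeries.C (σ := Fin 2) (R := R) c)).mul
          (rootSeq_invariant c hc f hf m).2
        simpa using this
      have := (h2.mono (by omega : k + 1 ≤ m + 1)).add h1
      simpa using this
    · have : k = m + 1 := by omega
      subst this
      simpa using ordGE_zero _

/-- The limit of the Newton iteration. -/
noncomputable def rootLimit (q : ℕ) (c : R) (f : MvPowerSeries (Fin 2) R) :
    MvPowerSeries (Fin 2) R :=
  fun d => MvPowerSeries.coeff (R := R) d (rootSeq (q := q) c f (d 0 + d 1))

include hc hf in
lemma rootLimit_approx : ∀ n : ℕ, OrdGE n (rootLimit q c f - rootSeq (q := q) c f n) := by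
  intro n d hd
  rw [map_sub]
  have hcoeff : MvPowerSeries.coeff (R := R) d (rootLimit q c f)
      = MvPowerSeries.coeff (R := R) d (rootSeq (q := q) c f (d 0 + d 1)) := rfl
  rw [hcoeff]
  have := rootSeq_stable hc hf (d 0 + d 1) n (by omega) d (by omega)
  rw [map_sub] at this
  rw [sub_eq_zero] at this ⊢
  exact this.symm
  
end Root2

lemma OrdGE.pow {n : ℕ} {a b : MvPowerSeries (Fin 2) R} (h : OrdGE n (a - b)) (k : ℕ) :
    OrdGE n (a ^ k - b ^ k) := by
  induction k with
  | zero => simpa using ordGE_zero n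
  | succ k ih =>
    have key : a ^ (k+1) - b ^ (k+1) = a ^ k * (a - b) + (a ^ k - b ^ k) * b := by ring
    rw [key]
    have h1 : OrdGE n (a ^ k * (a - b)) := by
      have := (ordGE_all (a ^ k)).mul h
      simpa using this
    have h2 : OrdGE n ((a ^ k - b ^ k) * b) := by
      have := ih.mul (ordGE_all b)
      simpa using this
    exact h1.add h2

/-- Existence of `q`-th roots of power series with constant coefficient 1,
when `q` is invertible. -/
theorem exists_pow_root {q : ℕ} (hq : IsUnit (q : R)) {f : MvPowerSeries (Fin 2) R}
    (hf : MvPowerSeries.constantCoeff (σ := Fin 2) (R := R) f = 1) :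
    ∃ g : MvPowerSeries (Fin 2) R, g ^ q = f ∧
      MvPowerSeries.constantCoeff (σ := Fin 2) (R := R) g = 1 := by
  obtain ⟨u, hu⟩ := hq
  set c : R := ((u⁻¹ : Rˣ) : R) with hcdef
  have hc : (q : R) * c = 1 := by
    rw [← hu, hcdef]
    exact u.mul_inv
  refine ⟨rootLimit q c f, ?_, ?_⟩
  · apply eq_comm.mp
    apply sub_eq_zero.mp
    apply OrdGE.eq_zero_of_forall
    intro n
    have h1 : OrdGE n (f - (rootSeq (q := q) c f n) ^ q) :=
      ((rootSeq_invariant c hc f hf n).2).mono (by omega)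
    have h2 : OrdGE n ((rootSeq (q := q) c f n) ^ q - (rootLimit q c f) ^ q) := by
      have h := (rootLimit_approx hc hf n).neg
      rw [neg_sub] at h
      exact h.pow q
    have := h1.add h2
    simpa using this
  · have := rootLimit_approx hc hf 1 0 (by simp)
    rw [map_sub, sub_eq_zero] at this
    have h0 : MvPowerSeries.coeff (R := R) 0 (rootSeq (q := q) c f 1) = 1 := by
      rw [MvPowerSeries.coeff_zero_eq_constantCoeff]
      exact (rootSeq_invariant c hc f hf 1).1
    rw [MvPowerSeries.coeff_zero_eq_constantCoeff] at this h0
    rw [this, h0]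

section Eval

variable {C : Type*} [NontriviallyNormedField C] [CompleteSpace C] [IsUltrametricDist C]

variable (R : Subring C) (x y : C) 

/-- Terms of the evaluation of a power series at `(x, y)`. -/
def evTerm (f : MvPowerSeries (Fin 2) R) (d : Fin 2 →₀ ℕ) : C :=
  ((MvPowerSeries.coeff (R := R) d f : R) : C) * x ^ (d 0) * y ^ (d 1)

variable (hR : ∀ a : R, ‖(a : C)‖ ≤ 1) (hx : ‖x‖ < 1) (hy : ‖y‖ < 1)

include hR hx hy

lemma evTerm_norm_le (f : MvPowerSeries (Fin 2) R) (d : Fin 2 →₀ ℕ) :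
    ‖evTerm R x y f d‖ ≤ ‖x‖ ^ (d 0) * ‖y‖ ^ (d 1) := by
  rw [evTerm, norm_mul, norm_mul, norm_pow, norm_pow]
  have := hR (MvPowerSeries.coeff (R := R) d f)
  have h1 : (0:ℝ) ≤ ‖x‖ ^ (d 0) := by positivity
  have h2 : (0:ℝ) ≤ ‖y‖ ^ (d 1) := by positivity
  nlinarith [mul_nonneg h1 h2, norm_nonneg ((MvPowerSeries.coeff (R := R) d f : C))]

lemma summable_geom_finsupp :
    Summable (fun d : Fin 2 →₀ ℕ => ‖x‖ ^ (d 0) * ‖y‖ ^ (d 1)) := by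
  have hgx : Summable (fun n : ℕ => ‖x‖ ^ n) := summable_geometric_of_lt_one (norm_nonneg x) hx
  have hgy : Summable (fun n : ℕ => ‖y‖ ^ n) := summable_geometric_of_lt_one (norm_nonneg y) hy
  have hprod : Summable (fun nm : ℕ × ℕ => ‖x‖ ^ nm.1 * ‖y‖ ^ nm.2) :=
    hgx.mul_of_nonneg hgy (fun n => by positivity) (fun n => by positivity)
  let e : (Fin 2 →₀ ℕ) ≃ ℕ × ℕ :=
    Finsupp.equivFunOnFinite.trans (piFinTwoEquiv (fun _ => ℕ))
  have h := (Equiv.summable_iff e).mpr hprod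
  exact h.congr (fun d => by simp [e, Equiv.trans_apply, Finsupp.equivFunOnFinite, piFinTwoEquiv])

lemma evTerm_summable_norm (f : MvPowerSeries (Fin 2) R) :
    Summable (fun d => ‖evTerm R x y f d‖) :=
  (summable_geom_finsupp R x y hR hx hy).of_nonneg_of_le (fun _ => norm_nonneg _)
    (evTerm_norm_le R x y hR hx hy f)

lemma evTerm_summable (f : MvPowerSeries (Fin 2) R) : Summable (evTerm R x y f) :=
  (evTerm_summable_norm R x y hR hx hy f).of_norm

end Eval

section Eval2

variable {C : Type*} [NontriviallyNormedField C] [CompleteSpace C] [IsUltrametricDist C]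

variable (R : Subring C) (x y : C)

/-- Evaluation of a power series at `(x, y)`. -/
noncomputable def evFun (f : MvPowerSeries (Fin 2) R) : C := ∑' d, evTerm R x y f d

variable (hR : ∀ a : R, ‖(a : C)‖ ≤ 1) (hx : ‖x‖ < 1) (hy : ‖y‖ < 1)

include hR hx hy

lemma evFun_one : evFun R x y (1 : MvPowerSeries (Fin 2) R) = 1 := by
  classical
  rw [evFun, tsum_eq_single 0]
  · simp [evTerm, MvPowerSeries.coeff_one]
  · intro d hd
    simp [evTerm, MvPowerSeries.coeff_one, hd]

lemma evFun_add (f g : MvPowerSeries (Fin 2) R) :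
    evFun R x y (f + g) = evFun R x y f + evFun R x y g := by
  rw [evFun, evFun, evFun, ← Summable.tsum_add (evTerm_summable R x y hR hx hy f)
    (evTerm_summable R x y hR hx hy g)]
  congr 1
  funext d
  simp [evTerm, mul_add, add_mul]

lemma evFun_mul (f g : MvPowerSeries (Fin 2) R) :
    evFun R x y (f * g) = evFun R x y f * evFun R x y g := by
  classical
  rw [evFun, evFun, evFun,
    Summable.tsum_mul_tsum_eq_tsum_sum_antidiagonal (evTerm_summable R x y hR hx hy f)
      (evTerm_summable R x y hR hx hy g)
      (summable_mul_of_summable_norm (evTerm_summable_norm R x y hR hx hy f)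
        (evTerm_summable_norm R x y hR hx hy g))]
  congr 1
  funext d
  rw [evTerm, MvPowerSeries.coeff_mul]
  push_cast
  rw [Finset.sum_mul, Finset.sum_mul]
  apply Finset.sum_congr rfl
  rintro ⟨e, e'⟩ hmem
  rw [Finset.HasAntidiagonal.mem_antidiagonal] at hmem
  have h0 : e 0 + e' 0 = d 0 := by rw [← hmem]; simp
  have h1 : e 1 + e' 1 = d 1 := by rw [← hmem]; simp
  rw [evTerm, evTerm, ← h0, ← h1, pow_add, pow_add]
  ring

end Eval2

section Eval3

variable {C : Type*} [NontriviallyNormedField C] [CompleteSpace C] [IsUltrametricDist C]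

variable (R : Subring C) (x y : C)
variable (hR : ∀ a : R, ‖(a : C)‖ ≤ 1) (hx : ‖x‖ < 1) (hy : ‖y‖ < 1)

/-- Evaluation as a ring homomorphism. -/
noncomputable def evHom : MvPowerSeries (Fin 2) R →+* C where
  toFun := evFun R x y
  map_one' := evFun_one R x y hR hx hy
  map_mul' := evFun_mul R x y hR hx hy
  map_zero' := by
    show evFun R x y 0 = 0
    rw [evFun]
    convert tsum_zero with d
    simp [evTerm]
  map_add' := evFun_add R x y hR hx hy

lemma evHom_C (a : R) :
    evHom R x y hR hx hy (MvPowerSeries.C (σ := Fin 2) (R := R) a) = (a : C) := by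
  classical
  show evFun R x y _ = _
  rw [evFun, tsum_eq_single 0]
  · simp [evTerm, MvPowerSeries.coeff_C]
  · intro d hd
    simp [evTerm, MvPowerSeries.coeff_C, hd]

lemma evHom_X0 : evHom R x y hR hx hy (MvPowerSeries.X 0) = x := by
  classical
  show evFun R x y _ = _
  rw [evFun, tsum_eq_single (Finsupp.single (0 : Fin 2) 1)]
  · simp [evTerm, MvPowerSeries.coeff_X, Finsupp.single_apply]
  · intro d hd
    simp [evTerm, MvPowerSeries.coeff_X, hd]

lemma evHom_X1 : evHom R x y hR hx hy (MvPowerSeries.X 1) = y := by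
  classical
  show evFun R x y _ = _
  rw [evFun, tsum_eq_single (Finsupp.single (1 : Fin 2) 1)]
  · simp [evTerm, MvPowerSeries.coeff_X, Finsupp.single_apply]
  · intro d hd
    simp [evTerm, MvPowerSeries.coeff_X, hd]

include hR hx hy in
lemma evFun_norm_one {g : MvPowerSeries (Fin 2) R}
    (hg : MvPowerSeries.coeff (R := R) 0 g = 1) : ‖evFun R x y g‖ = 1 := by
  classical
  have hB0 : (0:ℝ) ≤ max ‖x‖ ‖y‖ := le_max_of_le_left (norm_nonneg x)
  have hB1 : max ‖x‖ ‖y‖ < 1 := max_lt hx hy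
  have hsub : evFun R x y g - 1 = ∑' d, (if d = 0 then 0 else evTerm R x y g d) := by
    rw [evFun, Summable.tsum_eq_add_tsum_ite (evTerm_summable R x y hR hx hy g) 0]
    have h0 : evTerm R x y g 0 = 1 := by simp [evTerm, hg]
    rw [h0]
    ring
  have hnorm : ‖evFun R x y g - 1‖ ≤ max ‖x‖ ‖y‖ := by
    rw [hsub]
    apply IsUltrametricDist.norm_tsum_le_of_forall_le_of_nonneg hB0
    intro d
    by_cases hd : d = 0
    · simp [hd, hB0]
    · simp only [hd, if_false]
      refine le_trans (evTerm_norm_le R x y hR hx hy g d) ?_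
      have hne : d 0 ≥ 1 ∨ d 1 ≥ 1 := by
        by_contra h
        push_neg at h
        apply hd
        ext i
        fin_cases i <;> simp <;> omega
      have hxl : ‖x‖ ≤ 1 := le_of_lt hx
      have hyl : ‖y‖ ≤ 1 := le_of_lt hy
      rcases hne with h | h
      · calc ‖x‖ ^ d 0 * ‖y‖ ^ d 1 ≤ ‖x‖ ^ 1 * 1 := by
              apply mul_le_mul (pow_le_pow_of_le_one (norm_nonneg x) hxl h)
                (pow_le_one₀ (norm_nonneg y) hyl) (by positivity) (by positivity)
          _ = ‖x‖ := by ring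
          _ ≤ max ‖x‖ ‖y‖ := le_max_left _ _
      · calc ‖x‖ ^ d 0 * ‖y‖ ^ d 1 ≤ 1 * ‖y‖ ^ 1 := by
              apply mul_le_mul (pow_le_one₀ (norm_nonneg x) hxl)
                (pow_le_pow_of_le_one (norm_nonneg y) hyl h) (by positivity) (by norm_num)
          _ = ‖y‖ := by ring
          _ ≤ max ‖x‖ ‖y‖ := le_max_right _ _
  -- now ‖a - 1‖ < 1 implies ‖a‖ = 1
  have hlt : ‖evFun R x y g - 1‖ < 1 := lt_of_le_of_lt hnorm hB1
  have h1 : ‖evFun R x y g‖ ≤ 1 := by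
    have h := IsUltrametricDist.norm_add_le_max (evFun R x y g - 1) 1
    rw [sub_add_cancel] at h
    refine le_trans h (max_le (le_of_lt hlt) (by simp))
  have h2 : (1:ℝ) ≤ ‖evFun R x y g‖ := by
    by_contra hcon
    push_neg at hcon
    have := IsUltrametricDist.norm_add_le_max (1 - evFun R x y g) (evFun R x y g)
    rw [sub_add_cancel] at this
    rw [norm_sub_rev] at hlt
    have : (1:ℝ) ≤ max ‖1 - evFun R x y g‖ ‖evFun R x y g‖ := by simpa using this
    rcases max_cases ‖1 - evFun R x y g‖ ‖evFun R x y g‖ with ⟨heq, _⟩ | ⟨heq, _⟩ <;>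
      rw [heq] at this <;> linarith
  linarith

end Eval3

end Aux


section Glue

variable (p : ℕ) {C : Type*} [NontriviallyNormedField C] [IsAlgClosed C] [CompleteSpace C]
    [IsUltrametricDist C] (α : UnitBall C)

lemma ballR : ∀ a : UnitBall C, ‖(a : C)‖ ≤ 1 := fun a => a.2

lemma evHom_apply (x y : C) (hR : ∀ a : UnitBall C, ‖(a : C)‖ ≤ 1)
    (hx : ‖x‖ < 1) (hy : ‖y‖ < 1) (f : MvPowerSeries (Fin 2) (UnitBall C)) :
    evHom (UnitBall C) x y hR hx hy f = evFun (UnitBall C) x y f := rfl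

lemma jambe_eval (hpC : (p : C) ≠ 0) (x y : C) (hx : ‖x‖ < 1) (hy : ‖y‖ < 1)
    (hxy : x * y = (α : C)) :
    ∃ Φ : JambeLoc p C α →+* C,
      ∀ f, Φ (jambeMap p C α f) = evHom (UnitBall C) x y (ballR (C := C)) hx hy f := by
  set ev := evHom (UnitBall C) x y (ballR (C := C)) hx hy with hev
  have hgen : ev ((MvPowerSeries.X 0 : MvPowerSeries (Fin 2) (UnitBall C)) * MvPowerSeries.X 1
      - MvPowerSeries.C (σ := Fin 2) (R := UnitBall C) α) = 0 := by
    rw [map_sub, map_mul, hev, evHom_X0, evHom_X1, evHom_C, hxy, sub_self]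
  set I := Ideal.span {(MvPowerSeries.X 0 : MvPowerSeries (Fin 2) (UnitBall C)) *
      MvPowerSeries.X 1 - MvPowerSeries.C (σ := Fin 2) (R := UnitBall C) α} with hI
  have hIz : ∀ a ∈ I, ev a = 0 := by
    intro a ha
    rw [hI, Ideal.mem_span_singleton] at ha
    obtain ⟨w, rfl⟩ := ha
    rw [map_mul, hgen, zero_mul]
  set evq : JambeRing C α →+* C := Ideal.Quotient.lift I ev hIz with hevq
  have hu : IsUnit (evq ((p : ℕ) : JambeRing C α)) := by
    rw [map_natCast]
    exact isUnit_iff_ne_zero.mpr hpC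
  refine ⟨IsLocalization.Away.lift (S := JambeLoc p C α) ((p : ℕ) : JambeRing C α) hu, ?_⟩
  intro f
  show IsLocalization.Away.lift _ hu
      ((algebraMap (JambeRing C α) (JambeLoc p C α)) (Ideal.Quotient.mk I f)) = _
  rw [IsLocalization.Away.lift_eq]
  show evq (Ideal.Quotient.mk I f) = _
  rw [hevq, Ideal.Quotient.lift_mk]

end Glue

theorem jambe_symbols_ladic (p ℓ : ℕ) (hp : p.Prime) (hℓ : ℓ.Prime) (hℓp : ℓ ≠ p)
    (C : Type*) [NontriviallyNormedField C] [IsAlgClosed C] [CompleteSpace C]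
    [IsUltrametricDist C]
    (hnorm : ‖(p : C)‖ = (p : ℝ)⁻¹)
    (hval : ∀ x : C, x ≠ 0 → ∃ q : ℚ, ‖x‖ = (p : ℝ) ^ (-(q : ℝ)))
    (hval' : ∀ q : ℚ, ∃ x : C, x ≠ 0 ∧ ‖x‖ = (p : ℝ) ^ (-(q : ℝ)))
    -- `0 < v_p α < ∞`:
    (α : UnitBall C) (hα0 : (α : C) ≠ 0) (hα1 : ‖(α : C)‖ < 1)
    -- `T₁` as a unit of `Λ_α[1/p]`:
    (t₁ : (JambeLoc p C α)ˣ)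
    (ht₁ : (t₁ : JambeLoc p C α) = jambeMap p C α (MvPowerSeries.X 0))
    -- `deg : M → ℤ` is a group homomorphism,
    (deg : (JambeLoc p C α)ˣ → ℤ)
    (hdeg_hom : ∀ u v : (JambeLoc p C α)ˣ, deg (u * v) = deg u + deg v)
    -- sending `u` to the integer `k` in its unique factorization
    -- `u = c·T₁^k·u₊·u₋`:
    (hdeg_fact : ∀ u : (JambeLoc p C α)ˣ,
      ∃ c up um : JambeLoc p C α,
        (MemCstar p C α c ∧ MemOneAddT p C α 0 up ∧ MemOneAddT p C α 1 um) ∧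
        (u : JambeLoc p C α) =
          c * ((t₁ ^ deg u : (JambeLoc p C α)ˣ) : JambeLoc p C α) * up * um) :
    -- injectivity of the induced map `lim_n M/M^{ℓⁿ} → lim_n ℤ/ℓⁿℤ`:
    (∀ u : ℕ → (JambeLoc p C α)ˣ,
      (∀ n, ∃ w : (JambeLoc p C α)ˣ, u (n + 1) = u n * w ^ (ℓ ^ n)) →
      (∀ n, (ℓ : ℤ) ^ n ∣ deg (u n)) →
      ∀ n, ∃ w : (JambeLoc p C α)ˣ, u n = w ^ (ℓ ^ n)) ∧
    -- surjectivity of the induced map onto `lim_n ℤ/ℓⁿℤ = ℤ_ℓ`: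
    (∀ k : ℕ → ℤ, (∀ n, (ℓ : ℤ) ^ n ∣ k (n + 1) - k n) →
      ∃ u : ℕ → (JambeLoc p C α)ˣ,
        (∀ n, ∃ w : (JambeLoc p C α)ˣ, u (n + 1) = u n * w ^ (ℓ ^ n)) ∧
        ∀ n, (ℓ : ℤ) ^ n ∣ deg (u n) - k n) := by
  classical
  have hR : ∀ a : UnitBall C, ‖(a : C)‖ ≤ 1 := fun a => a.2
  have hp1 : (1:ℝ) < (p:ℝ) := by exact_mod_cast hp.one_lt
  have hppos : (0:ℝ) < (p:ℝ) := by linarith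
  have hpC : (p : C) ≠ 0 := by
    intro h
    rw [h, norm_zero] at hnorm
    have : (0:ℝ) < (p:ℝ)⁻¹ := by positivity
    linarith [hnorm ▸ this]
  -- ℓ is a unit in the valuation ring
  have hℓC : ‖(ℓ : C)‖ = 1 := by
    have hle : ‖(ℓ : C)‖ ≤ 1 := IsUltrametricDist.norm_natCast_le_one C ℓ
    rcases lt_or_eq_of_le hle with hlt | heq
    · exfalso
      have hco : IsCoprime (ℓ : ℤ) (p : ℤ) := by
        rw [Int.isCoprime_iff_gcd_eq_one]
        exact_mod_cast (Nat.coprime_primes hℓ hp).mpr hℓp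
      obtain ⟨a, b, hab⟩ := hco
      have h1 : ((a : ℤ) : C) * (ℓ : C) + ((b : ℤ) : C) * (p : C) = 1 := by
        exact_mod_cast congrArg (fun z : ℤ => (z : C)) hab
      have hna : ‖((a : ℤ) : C)‖ ≤ 1 := IsUltrametricDist.norm_intCast_le_one C a
      have hnb : ‖((b : ℤ) : C)‖ ≤ 1 := IsUltrametricDist.norm_intCast_le_one C b
      have hmax := IsUltrametricDist.norm_add_le_max (((a : ℤ) : C) * (ℓ : C))
        (((b : ℤ) : C) * (p : C))
      rw [h1, norm_one] at hmax
      have hA : ‖((a : ℤ) : C) * (ℓ : C)‖ < 1 := by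
        rw [norm_mul]
        nlinarith [norm_nonneg ((a : ℤ) : C), norm_nonneg ((ℓ : C))]
      have hB : ‖((b : ℤ) : C) * (p : C)‖ < 1 := by
        rw [norm_mul, hnorm]
        have hpinv : (p:ℝ)⁻¹ < 1 := by
          rw [inv_lt_one_iff₀]; right; exact hp1
        nlinarith [norm_nonneg ((b : ℤ) : C), inv_nonneg.mpr (le_of_lt hppos)]
      rcases max_cases ‖((a : ℤ) : C) * (ℓ : C)‖ ‖((b : ℤ) : C) * (p : C)‖ with
        ⟨hm, _⟩ | ⟨hm, _⟩ <;> rw [hm] at hmax <;> linarith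
    · exact heq
  have hℓC0 : (ℓ : C) ≠ 0 := by
    intro h; rw [h, norm_zero] at hℓC; linarith
  have hℓR : IsUnit ((ℓ : ℕ) : UnitBall C) := by
    have hinv : ‖(ℓ : C)⁻¹‖ ≤ 1 := by rw [norm_inv, hℓC]; norm_num
    refine IsUnit.of_mul_eq_one ⟨(ℓ : C)⁻¹, hinv⟩ ?_
    ext
    push_cast
    exact mul_inv_cancel₀ hℓC0
  have hqunit : ∀ n : ℕ, IsUnit ((ℓ ^ n : ℕ) : UnitBall C) := by
    intro n
    have h : ((ℓ ^ n : ℕ) : UnitBall C) = ((ℓ : ℕ) : UnitBall C) ^ n := by push_cast; ring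
    rw [h]
    exact hℓR.pow n
  -- q-th roots in the valuation ring
  have hballroot : ∀ (a : UnitBall C) (q : ℕ), q ≠ 0 → ∃ b : UnitBall C, b ^ q = a := by
    intro a q hq
    obtain ⟨z, hz⟩ := IsAlgClosed.exists_pow_nat_eq (a : C) (Nat.pos_of_ne_zero hq)
    have hzn : ‖z‖ ≤ 1 := by
      have h1 : ‖z‖ ^ q ≤ 1 := by
        rw [← norm_pow, hz]; exact a.2
      exact (pow_le_one_iff_of_nonneg (norm_nonneg z) hq).mp h1
    refine ⟨⟨z, hzn⟩, ?_⟩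
    ext
    push_cast
    exact hz
  -- q-th roots of constants
  have hcroot : ∀ (q : ℕ), q ≠ 0 → ∀ c : JambeLoc p C α, MemCstar p C α c →
      ∃ w : JambeLoc p C α, w ^ q = c := by
    intro q hq c hc
    obtain ⟨a, s, ha0, hpsc⟩ := hc
    obtain ⟨b, hb⟩ := hballroot a q hq
    obtain ⟨π, hπ⟩ := hballroot ((p : ℕ) : UnitBall C) q hq
    have hPunit : IsUnit ((p : ℕ) : JambeLoc p C α) := by
      have h := IsLocalization.Away.algebraMap_isUnit
        (S := JambeLoc p C α) ((p : ℕ) : JambeRing C α)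
      rwa [map_natCast] at h
    set x : JambeLoc p C α :=
      jambeMap p C α (MvPowerSeries.C (σ := Fin 2) (R := UnitBall C) π) with hxdef
    have hxq : x ^ q = ((p : ℕ) : JambeLoc p C α) := by
      rw [hxdef, ← map_pow, ← map_pow, hπ, map_natCast, map_natCast]
    have hxunit : IsUnit x := (isUnit_pow_iff hq).mp (hxq ▸ hPunit)
    obtain ⟨Pu, hPu⟩ := hxunit
    refine ⟨jambeMap p C α (MvPowerSeries.C (σ := Fin 2) (R := UnitBall C) b) *
      ((Pu⁻¹ : (JambeLoc p C α)ˣ) : JambeLoc p C α) ^ s, ?_⟩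
    have hps : IsUnit (((p : ℕ) : JambeLoc p C α) ^ s) := hPunit.pow s
    apply hps.mul_left_cancel
    have hcancel : ((p : ℕ) : JambeLoc p C α) ^ s *
        (((Pu⁻¹ : (JambeLoc p C α)ˣ) : JambeLoc p C α) ^ s) ^ q = 1 := by
      rw [← hxq, ← hPu, ← pow_mul, ← pow_mul, mul_comm q s, ← mul_pow, Units.mul_inv, one_pow]
    calc ((p : ℕ) : JambeLoc p C α) ^ s *
        (jambeMap p C α (MvPowerSeries.C (σ := Fin 2) (R := UnitBall C) b) *
          ((Pu⁻¹ : (JambeLoc p C α)ˣ) : JambeLoc p C α) ^ s) ^ q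
        = jambeMap p C α ((MvPowerSeries.C (σ := Fin 2) (R := UnitBall C) b) ^ q) *
          (((p : ℕ) : JambeLoc p C α) ^ s *
            (((Pu⁻¹ : (JambeLoc p C α)ˣ) : JambeLoc p C α) ^ s) ^ q) := by
          rw [mul_pow, map_pow]; ring
      _ = jambeMap p C α (MvPowerSeries.C (σ := Fin 2) (R := UnitBall C) a) := by
          rw [hcancel, mul_one, ← hb]
          simp only [map_pow]
      _ = ((p : ℕ) : JambeLoc p C α) ^ s * c := hpsc.symm
  -- ℓ^n-th roots of one-plus-T elements
  have hozroot : ∀ (n : ℕ) (i : Fin 2) (z : JambeLoc p C α), MemOneAddT p C α i z →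
      ∃ w : JambeLoc p C α, w ^ (ℓ ^ n) = z := by
    intro n i z hz
    obtain ⟨g, hg1, _, rfl⟩ := hz
    have hgc : MvPowerSeries.constantCoeff (σ := Fin 2) (R := UnitBall C) g = 1 := by
      rw [← MvPowerSeries.coeff_zero_eq_constantCoeff_apply]
      exact hg1
    obtain ⟨h, hh, _⟩ := exists_pow_root (hqunit n) hgc
    exact ⟨jambeMap p C α h, by rw [← map_pow, hh]⟩
  -- key lemma: units with degree divisible by ℓ^n are ℓ^n-th powers
  have key : ∀ (u : (JambeLoc p C α)ˣ) (n : ℕ), (ℓ : ℤ) ^ n ∣ deg u →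
      ∃ w : (JambeLoc p C α)ˣ, u = w ^ (ℓ ^ n) := by
    intro u n hdvd
    obtain ⟨c, up, um, ⟨hc, hup, hum⟩, hfact⟩ := hdeg_fact u
    obtain ⟨k, hk⟩ := hdvd
    have hq0 : ℓ ^ n ≠ 0 := pow_ne_zero n hℓ.ne_zero
    obtain ⟨wc, hwc⟩ := hcroot (ℓ ^ n) hq0 c hc
    obtain ⟨wup, hwup⟩ := hozroot n 0 up hup
    obtain ⟨wum, hwum⟩ := hozroot n 1 um hum
    have htz : (t₁ ^ deg u : (JambeLoc p C α)ˣ) = (t₁ ^ k) ^ (ℓ ^ n : ℕ) := by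
      rw [← zpow_natCast (t₁ ^ k) (ℓ ^ n), ← zpow_mul, hk]
      push_cast
      ring_nf
    set W : JambeLoc p C α :=
      wc * ((t₁ ^ k : (JambeLoc p C α)ˣ) : JambeLoc p C α) * wup * wum with hW
    have hWq : W ^ (ℓ ^ n) = (u : JambeLoc p C α) := by
      rw [hW, hfact, htz]
      rw [mul_pow, mul_pow, mul_pow, hwc, hwup, hwum, Units.val_pow_eq_pow_val]
    have hWunit : IsUnit W := by
      refine (isUnit_pow_iff hq0).mp ?_
      rw [hWq]
      exact u.isUnit
    obtain ⟨w, hw⟩ := hWunit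
    refine ⟨w, ?_⟩
    ext
    rw [Units.val_pow_eq_pow_val, hw, hWq]
  -- degree is a homomorphism: package
  have deg_zpow : ∀ z : ℤ, deg (t₁ ^ z) = z * deg t₁ := by
    intro z
    set dh : (JambeLoc p C α)ˣ →* Multiplicative ℤ :=
      MonoidHom.mk' (fun u => Multiplicative.ofAdd (deg u))
        (fun a b => by
          show Multiplicative.ofAdd (deg (a * b))
              = Multiplicative.ofAdd (deg a) * Multiplicative.ofAdd (deg b)
          rw [hdeg_hom]
          rfl) with hdh
    have h := map_zpow dh t₁ z
    have h2 : Multiplicative.toAdd (dh (t₁ ^ z)) = deg (t₁ ^ z) := rfl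
    rw [h] at h2
    rw [← h2, toAdd_zpow]
    simp [hdh, smul_eq_mul]
  -- the degree of t₁ is 1
  have hdeg1 : deg t₁ = 1 := by
    obtain ⟨c, up, um, ⟨hc, hup, hum⟩, hfact⟩ := hdeg_fact t₁
    obtain ⟨a, s, ha0, hpsc⟩ := hc
    set m : ℤ := 1 - deg t₁ with hm
    have e1 : ((t₁ ^ m : (JambeLoc p C α)ˣ) : JambeLoc p C α) = c * up * um := by
      calc ((t₁ ^ m : (JambeLoc p C α)ˣ) : JambeLoc p C α)
          = ((t₁ : (JambeLoc p C α)ˣ) : JambeLoc p C α) *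
            (((t₁ ^ deg t₁)⁻¹ : (JambeLoc p C α)ˣ) : JambeLoc p C α) := by
            rw [hm, zpow_sub, zpow_one, Units.val_mul]
        _ = c * ((t₁ ^ deg t₁ : (JambeLoc p C α)ˣ) : JambeLoc p C α) * up * um *
            (((t₁ ^ deg t₁)⁻¹ : (JambeLoc p C α)ˣ) : JambeLoc p C α) := by rw [hfact]
        _ = c * up * um * (((t₁ ^ deg t₁ : (JambeLoc p C α)ˣ) : JambeLoc p C α) *
            (((t₁ ^ deg t₁)⁻¹ : (JambeLoc p C α)ˣ) : JambeLoc p C α)) := by ring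
        _ = c * up * um := by rw [Units.mul_inv, mul_one]
    -- the norm equation for an admissible evaluation point
    have hxnorm : ∀ x : C, x ≠ 0 → ‖(α : C)‖ < ‖x‖ → ‖x‖ < 1 →
        ‖x‖ ^ m = ‖(a : C)‖ * (p : ℝ) ^ s := by
      intro x hx0 hαx hx1
      have hxpos : (0:ℝ) < ‖x‖ := norm_pos_iff.mpr hx0
      set y : C := (α : C) / x with hy
      have hy1 : ‖y‖ < 1 := by
        rw [hy, norm_div, div_lt_one hxpos]
        exact hαx
      have hxy : x * y = (α : C) := by
        rw [hy]; field_simp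
      obtain ⟨Φ, hΦ⟩ := jambe_eval p α hpC x y hx1 hy1 hxy
      -- Φ of t₁ is x
      have hT : Φ ((t₁ : (JambeLoc p C α)ˣ) : JambeLoc p C α) = x := by
        rw [ht₁, hΦ, evHom_X0]
      -- Φ of the unit zpow
      have hTz : Φ ((t₁ ^ m : (JambeLoc p C α)ˣ) : JambeLoc p C α) = x ^ m := by
        have h1 : Φ ((t₁ ^ m : (JambeLoc p C α)ˣ) : JambeLoc p C α)
            = ((Units.map (Φ : JambeLoc p C α →* C) (t₁ ^ m) : Cˣ) : C) := by
          rw [Units.coe_map]; rfl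
        rw [h1, map_zpow, Units.val_zpow_eq_zpow_val, Units.coe_map]
        show (Φ ((t₁ : (JambeLoc p C α)ˣ) : JambeLoc p C α)) ^ m = x ^ m
        rw [hT]
      -- norms of the three factors
      have hcn : ‖Φ c‖ = ‖(a : C)‖ * (p : ℝ) ^ s := by
        have h1 : Φ (((p : ℕ) : JambeLoc p C α) ^ s * c)
            = Φ (jambeMap p C α (MvPowerSeries.C (σ := Fin 2) (R := UnitBall C) a)) := by rw [hpsc]
        rw [map_mul, map_pow,
          show Φ (((p : ℕ) : JambeLoc p C α)) = ((p : ℕ) : C) from map_natCast Φ p,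
          hΦ, evHom_C] at h1
        have h2 : ‖(p : C) ^ s * Φ c‖ = ‖(a : C)‖ := by rw [h1]
        rw [norm_mul, norm_pow, hnorm] at h2
        have h4 : ‖Φ c‖ = (p:ℝ) ^ s * (((p:ℝ)⁻¹) ^ s * ‖Φ c‖) := by
          rw [← mul_assoc, ← mul_pow, mul_inv_cancel₀ (ne_of_gt hppos), one_pow, one_mul]
        rw [h4, h2]
        ring
      have hupn : ‖Φ up‖ = 1 := by
        obtain ⟨g, hg1, _, rfl⟩ := hup
        rw [hΦ, evHom_apply]
        exact evFun_norm_one (UnitBall C) x y (ballR (C := C)) hx1 hy1 hg1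
      have humn : ‖Φ um‖ = 1 := by
        obtain ⟨g, hg1, _, rfl⟩ := hum
        rw [hΦ, evHom_apply]
        exact evFun_norm_one (UnitBall C) x y (ballR (C := C)) hx1 hy1 hg1
      have hfin := congrArg Φ e1
      rw [hTz, map_mul, map_mul] at hfin
      have := congrArg norm hfin
      rw [norm_zpow, norm_mul, norm_mul, hcn, hupn, humn] at this
      rw [this]; ring
    -- choose two evaluation points with different norms
    obtain ⟨qα, hqα⟩ := hval (α : C) hα0
    have hqpos : (0:ℝ) < (qα : ℝ) := by
      by_contra hcon
      push_neg at hcon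
      rw [hqα] at hα1
      have : (1:ℝ) ≤ (p:ℝ) ^ (-(qα : ℝ)) := by
        apply Real.one_le_rpow hp1.le
        linarith
      linarith
    obtain ⟨x₁, hx₁0, hx₁⟩ := hval' (qα / 2)
    obtain ⟨x₂, hx₂0, hx₂⟩ := hval' (qα / 3)
    have hcast2 : ((qα / 2 : ℚ) : ℝ) = (qα : ℝ) / 2 := by push_cast; ring
    have hcast3 : ((qα / 3 : ℚ) : ℝ) = (qα : ℝ) / 3 := by push_cast; ring
    have hx₁n : ‖x₁‖ = (p:ℝ) ^ (-(qα : ℝ) / 2) := by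
      rw [hx₁, hcast2]; ring_nf
    have hx₂n : ‖x₂‖ = (p:ℝ) ^ (-(qα : ℝ) / 3) := by
      rw [hx₂, hcast3]; ring_nf
    have hα_lt₁ : ‖(α : C)‖ < ‖x₁‖ := by
      rw [hqα, hx₁n]
      apply (Real.rpow_lt_rpow_left_iff hp1).mpr
      linarith
    have hα_lt₂ : ‖(α : C)‖ < ‖x₂‖ := by
      rw [hqα, hx₂n]
      apply (Real.rpow_lt_rpow_left_iff hp1).mpr
      linarith
    have hx₁1 : ‖x₁‖ < 1 := by
      rw [hx₁n]
      calc (p:ℝ) ^ (-(qα : ℝ) / 2) < (p:ℝ) ^ (0:ℝ) := by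
            apply (Real.rpow_lt_rpow_left_iff hp1).mpr; linarith
        _ = 1 := Real.rpow_zero _
    have hx₂1 : ‖x₂‖ < 1 := by
      rw [hx₂n]
      calc (p:ℝ) ^ (-(qα : ℝ) / 3) < (p:ℝ) ^ (0:ℝ) := by
            apply (Real.rpow_lt_rpow_left_iff hp1).mpr; linarith
        _ = 1 := Real.rpow_zero _
    have hne : ‖x₁‖ < ‖x₂‖ := by
      rw [hx₁n, hx₂n]
      apply (Real.rpow_lt_rpow_left_iff hp1).mpr
      linarith
    have heq1 := hxnorm x₁ hx₁0 hα_lt₁ hx₁1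
    have heq2 := hxnorm x₂ hx₂0 hα_lt₂ hx₂1
    have heq : ‖x₁‖ ^ m = ‖x₂‖ ^ m := by rw [heq1, heq2]
    have hx₁pos : (0:ℝ) < ‖x₁‖ := norm_pos_iff.mpr hx₁0
    have hx₂pos : (0:ℝ) < ‖x₂‖ := norm_pos_iff.mpr hx₂0
    have hlog := congrArg Real.log heq
    rw [Real.log_zpow, Real.log_zpow] at hlog
    have hm0 : m = 0 := by
      by_contra hmne
      have hmr : ((m : ℤ) : ℝ) ≠ 0 := Int.cast_ne_zero.mpr hmne
      have hlogeq : Real.log ‖x₁‖ = Real.log ‖x₂‖ := mul_left_cancel₀ hmr hlog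
      have := Real.log_injOn_pos (Set.mem_Ioi.mpr hx₁pos) (Set.mem_Ioi.mpr hx₂pos) hlogeq
      rw [this] at hne
      exact lt_irrefl _ hne
    rw [hm] at hm0
    omega
  -- conclude
  constructor
  · intro u _ hdvd n
    exact key (u n) n (hdvd n)
  · intro k hk
    refine ⟨fun n => t₁ ^ (k n), ?_, ?_⟩
    · intro n
      obtain ⟨cn, hcn⟩ := hk n
      refine ⟨t₁ ^ cn, ?_⟩
      have hexp : k (n + 1) = k n + cn * ((ℓ ^ n : ℕ) : ℤ) := by
        push_cast
        linear_combination hcn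
      show t₁ ^ k (n + 1) = t₁ ^ k n * (t₁ ^ cn) ^ ℓ ^ n
      rw [hexp, zpow_add, ← zpow_natCast (t₁ ^ cn) (ℓ ^ n), ← zpow_mul]
    · intro n
      rw [deg_zpow, hdeg1, mul_one, sub_self]
      exact dvd_zero _
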